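/- Let G be a graph that is a vertex-disjoint union of paths and cycles, with exactly p components that are paths and c components that are cycles. Let P₁, P₂ ⊆ G be two vertex-disjoint subpaths of G, each with at least one edge. Let x be an endpoint of P₁ and y an endpoint of P₂, and assume e := {x, y} is not an edge of G. Then the graph (G \ (P₁ ∪ P₂)) ∪ {e}, obtained from G by deleting all edges of P₁ and P₂ and adding the edge e, is a vertex-disjoint union of paths and cycles, with at most p + 1 components that are paths with at least one edge, and at most c + 1 components that are cycles. -/

import Mathlib

open SimpleGraph

namespace Aux11

variable {V : Type*}

lemma endpoint_edge {K : SimpleGraph V} {u v : V} (W : K.Walk u v) (h : 1 ≤ W.length) :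
    ∃ z, s(u, z) ∈ W.edges := by
  cases W with
  | nil => simp at h
  | @cons u b v h' W' => exact ⟨b, by simp⟩

lemma endpoint_edge_unique {K : SimpleGraph V} {u v : V} (W : K.Walk u v) (hW : W.IsPath)
    {z₁ z₂ : V} (h₁ : s(u, z₁) ∈ W.edges) (h₂ : s(u, z₂) ∈ W.edges) : z₁ = z₂ := by
  cases W with
  | nil => simp at h₁
  | @cons u b v h' W' =>
    rw [SimpleGraph.Walk.cons_isPath_iff] at hW
    have key : ∀ z, s(u, z) ∈ (SimpleGraph.Walk.cons h' W').edges → z = b := by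
      intro z hz
      rw [SimpleGraph.Walk.edges_cons, List.mem_cons] at hz
      rcases hz with hz | hz
      · rcases Sym2.eq_iff.mp hz with ⟨-, h2⟩ | ⟨h1, h2⟩
        · exact h2
        · exact absurd (h1 ▸ hW.2) (by simp [← h2, SimpleGraph.Walk.start_mem_support])
      · exact absurd (SimpleGraph.Walk.fst_mem_support_of_mem_edges W' hz) hW.2
    rw [key z₁ h₁, key z₂ h₂]

lemma interior_two_edges {K : SimpleGraph V} {u v : V} (W : K.Walk u v) (hW : W.IsPath)
    {w : V} (hw : w ∈ W.support) (hu : w ≠ u) (hv : w ≠ v) :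
    ∃ z₁ z₂, z₁ ≠ z₂ ∧ s(w, z₁) ∈ W.edges ∧ s(w, z₂) ∈ W.edges := by
  induction W with
  | nil => simp at hw; exact absurd hw hu
  | @cons a b c h' W' ih =>
    rw [SimpleGraph.Walk.support_cons, List.mem_cons] at hw
    rcases hw with rfl | hw
    · exact absurd rfl hu
    rw [SimpleGraph.Walk.cons_isPath_iff] at hW
    by_cases hb : w = b
    · subst hb
      cases W' with
      | nil => exact absurd rfl hv
      | @cons b d c h'' W'' =>
        refine ⟨a, d, ?_, ?_, ?_⟩
        · rintro rfl
          exact hW.2 (SimpleGraph.Walk.support_cons _ _ ▸ List.mem_cons_of_mem _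
            (SimpleGraph.Walk.start_mem_support W''))
        · simp [Sym2.eq_swap]
        · simp
    · obtain ⟨z₁, z₂, hne, h1, h2⟩ := ih hW.1 hw hb hv
      exact ⟨z₁, z₂, hne, by simp [h1], by simp [h2]⟩



lemma ncard_eq_degree [Fintype V] (L : SimpleGraph V) [DecidableRel L.Adj] (v : V) :
    (L.neighborSet v).ncard = L.degree v := by
  rw [← card_neighborFinset_eq_degree, neighborFinset_def, Set.ncard_eq_toFinset_card']

lemma exists_other_endpoint [Fintype V] (K : SimpleGraph V)
    (hK : ∀ v, (K.neighborSet v).ncard ≤ 2) {v₀ : V}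
    (h1 : (K.neighborSet v₀).ncard = 1) :
    ∃ w, K.Reachable v₀ w ∧ w ≠ v₀ ∧ (K.neighborSet w).ncard = 1 := by
  classical
  by_contra hcon
  push_neg at hcon
  let K' : SimpleGraph V :=
    { Adj := fun a b => K.Adj a b ∧ K.Reachable v₀ a ∧ K.Reachable v₀ b
      symm := ⟨fun a b h => ⟨h.1.symm, h.2.2, h.2.1⟩⟩
      loopless := ⟨fun a h => K.irrefl h.1⟩ }
  letI : DecidableRel K'.Adj := Classical.decRel _
  have hnbr : ∀ v, K.Reachable v₀ v → K'.neighborSet v = K.neighborSet v := by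
    intro v hv; ext z; simp only [mem_neighborSet]
    exact ⟨fun h => h.1, fun h => ⟨h, hv, hv.trans h.reachable⟩⟩
  have hnbr0 : ∀ v, ¬ K.Reachable v₀ v → K'.neighborSet v = ∅ := by
    intro v hv; ext z; simp only [mem_neighborSet, Set.mem_empty_iff_false, iff_false]
    exact fun h => hv h.2.1
  have heven : Even (∑ v, K'.degree v) := by
    rw [sum_degrees_eq_twice_card_edges]; exact even_two_mul _
  rw [← Finset.add_sum_erase _ _ (Finset.mem_univ v₀)] at heven
  have hd₀ : K'.degree v₀ = 1 := by
    rw [← ncard_eq_degree, hnbr v₀ (Reachable.refl v₀), h1]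
  have hrest : Even (∑ v ∈ Finset.univ.erase v₀, K'.degree v) := by
    apply Finset.even_sum
    intro v hv
    rcases em (K.Reachable v₀ v) with hr | hr
    · have : K'.degree v = (K.neighborSet v).ncard := by
        rw [← ncard_eq_degree, hnbr v hr]
      have h2 := hK v
      have hne1 := hcon v hr (Finset.ne_of_mem_erase hv)
      rw [this, Nat.even_iff]; omega
    · have : K'.degree v = 0 := by
        rw [← ncard_eq_degree, hnbr0 v hr, Set.ncard_empty]
      rw [this]; exact Even.zero
  rw [hd₀, Nat.even_add, Nat.even_iff, Nat.even_iff] at heven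
  rw [Nat.even_iff] at hrest
  omega

lemma at_most_two_leaves [Fintype V] (K : SimpleGraph V)
    (hK : ∀ v, (K.neighborSet v).ncard ≤ 2) {a b c : V}
    (hab : K.Reachable a b) (hac : K.Reachable a c)
    (hab' : a ≠ b) (hac' : a ≠ c) (hbc' : b ≠ c)
    (ha : (K.neighborSet a).ncard ≤ 1) (hb : (K.neighborSet b).ncard ≤ 1)
    (hc : (K.neighborSet c).ncard ≤ 1) : False := by
  classical
  obtain ⟨W₀⟩ := hab
  set W := W₀.bypass with hWdef
  have hW : W.IsPath := W₀.bypass_isPath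
  have hlen : 1 ≤ W.length := by
    rcases Nat.eq_zero_or_pos W.length with h | h
    · exact absurd (W.eq_of_length_eq_zero h) hab'
    · exact h
  -- unique neighbor of endpoints
  have hend : ∀ {s t : V} (Q : K.Walk s t), Q.IsPath → 1 ≤ Q.length →
      (K.neighborSet s).ncard ≤ 1 → ∀ z, K.Adj s z → z ∈ Q.support := by
    intro s t Q hQ hQl hs z hz
    obtain ⟨z', hz'⟩ := endpoint_edge Q hQl
    have hadj' : K.Adj s z' := Q.adj_of_mem_edges hz'
    have : z = z' := by
      by_contra hne
      have hsub : ({z, z'} : Set V) ⊆ K.neighborSet s := by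
        rintro q (rfl | rfl) <;> simpa using (by assumption : K.Adj s q)
      have := Set.ncard_le_ncard hsub (Set.toFinite _)
      rw [Set.ncard_pair hne] at this
      omega
    exact this ▸ Q.snd_mem_support_of_mem_edges hz'
  have hclose : ∀ w ∈ W.support, ∀ z, K.Adj w z → z ∈ W.support := by
    intro w hw z hz
    rcases em (w = a) with rfl | hwa
    · exact hend W hW hlen ha z hz
    rcases em (w = b) with rfl | hwb
    · have := hend W.reverse hW.reverse (by rwa [Walk.length_reverse]) hb z hz
      rwa [Walk.support_reverse, List.mem_reverse] at this
    · obtain ⟨z₁, z₂, hne, h1, h2⟩ := interior_two_edges W hW hw hwa hwb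
      have hsub : ({z₁, z₂} : Set V) ⊆ K.neighborSet w := by
        rintro q (rfl | rfl)
        · exact W.adj_of_mem_edges h1
        · exact W.adj_of_mem_edges h2
      have hsup : K.neighborSet w ⊆ {z₁, z₂} := by
        have hcard : ({z₁, z₂} : Set V).ncard = 2 := Set.ncard_pair hne
        rw [Set.eq_of_subset_of_ncard_le hsub (by rw [hcard]; exact hK w) (Set.toFinite _)]
      rcases hsup hz with rfl | rfl
      · exact W.snd_mem_support_of_mem_edges h1
      · exact W.snd_mem_support_of_mem_edges h2
  have hkey : ∀ {s t : V} (Q : K.Walk s t), s ∈ W.support → t ∈ W.support := by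
    intro s t Q
    induction Q with
    | nil => exact id
    | cons h q ih => exact fun hs => ih (hclose _ hs _ h)
  obtain ⟨Wc⟩ := hac
  have hcmem : c ∈ W.support := hkey Wc W.start_mem_support
  obtain ⟨z₁, z₂, hne, h1, h2⟩ := interior_two_edges W hW hcmem (Ne.symm hac') (Ne.symm hbc')
  have hsub : ({z₁, z₂} : Set V) ⊆ K.neighborSet c := by
    rintro q (rfl | rfl)
    · exact W.adj_of_mem_edges h1
    · exact W.adj_of_mem_edges h2
  have := Set.ncard_le_ncard hsub (Set.toFinite _)
  rw [Set.ncard_pair hne] at this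
  omega


lemma cycle_count [Fintype V] (G G' : SimpleGraph V) (x y : V)
    (hG : ∀ v, (G.neighborSet v).ncard ≤ 2)
    (hsub : ∀ v, v ≠ x → v ≠ y → ∀ w, G'.Adj v w → G.Adj v w)
    (hxy' : G'.Adj x y) :
    Nat.card {C : G'.ConnectedComponent //
        ∀ v, G'.connectedComponentMk v = C → (G'.neighborSet v).ncard = 2} ≤
    Nat.card {C : G.ConnectedComponent //
        ∀ v, G.connectedComponentMk v = C → (G.neighborSet v).ncard = 2} + 1 := by
  classical
  -- neighbor sets agree on cycle components avoiding x
  have hnbr : ∀ (C : G'.ConnectedComponent),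
      (∀ v, G'.connectedComponentMk v = C → (G'.neighborSet v).ncard = 2) →
      C ≠ G'.connectedComponentMk x →
      ∀ v, G'.connectedComponentMk v = C → G.neighborSet v = G'.neighborSet v := by
    intro C hC hCx v hv
    have hvx : v ≠ x := by rintro rfl; exact hCx hv.symm
    have hvy : v ≠ y := by
      rintro rfl
      exact hCx (hv ▸ (ConnectedComponent.connectedComponentMk_eq_of_adj hxy'.symm).symm ▸ rfl)
    have hss : G'.neighborSet v ⊆ G.neighborSet v := fun w hw => hsub v hvx hvy w hw
    exact (Set.eq_of_subset_of_ncard_le hss (by rw [hC v hv]; exact hG v)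
      (Set.toFinite _)).symm
  have hkey : ∀ (C : G'.ConnectedComponent),
      (∀ v, G'.connectedComponentMk v = C → (G'.neighborSet v).ncard = 2) →
      C ≠ G'.connectedComponentMk x →
      ∀ {s t : V} (W : G.Walk s t), G'.connectedComponentMk s = C →
        G'.connectedComponentMk t = C ∧ G'.Reachable s t := by
    intro C hC hCx s t W
    induction W with
    | nil => exact fun hs => ⟨hs, Reachable.refl _⟩
    | @cons a b c h q ih =>
      intro hs
      have hb : G'.Adj a b := by
        have : b ∈ G'.neighborSet a := by
          rw [← hnbr C hC hCx a hs]; exact h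
        exact this
      have hbC : G'.connectedComponentMk b = C :=
        (ConnectedComponent.connectedComponentMk_eq_of_adj hb).symm.trans hs
      obtain ⟨ht, hr⟩ := ih hbC
      exact ⟨ht, hb.reachable.trans hr⟩
  set f : {C : G'.ConnectedComponent //
      ∀ v, G'.connectedComponentMk v = C → (G'.neighborSet v).ncard = 2} →
      Option {C : G.ConnectedComponent //
      ∀ v, G.connectedComponentMk v = C → (G.neighborSet v).ncard = 2} := fun ⟨C, hC⟩ =>
    if hCx : C = G'.connectedComponentMk x then none else
      some ⟨G.connectedComponentMk (Classical.choose C.exists_rep), by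
        intro w hw
        have hrep := Classical.choose_spec C.exists_rep
        have hreach : G.Reachable (Classical.choose C.exists_rep) w :=
          (ConnectedComponent.eq).mp hw.symm
        obtain ⟨Wk⟩ := hreach
        obtain ⟨hwC, -⟩ := hkey C hC hCx Wk hrep
        rw [hnbr C hC hCx w hwC]
        exact hC w hwC⟩ with hf
  have hinj : Function.Injective f := by
    rintro ⟨C₁, h₁⟩ ⟨C₂, h₂⟩ h
    simp only [hf] at h
    split_ifs at h with hc1 hc2
    · exact Subtype.ext (hc1.trans hc2.symm)
    · simp only [Option.some.injEq, Subtype.mk.injEq] at h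
      have hrep₁ := Classical.choose_spec C₁.exists_rep
      have hrep₂ := Classical.choose_spec C₂.exists_rep
      have hreach : G.Reachable (Classical.choose C₁.exists_rep)
          (Classical.choose C₂.exists_rep) := (ConnectedComponent.eq).mp h
      obtain ⟨Wk⟩ := hreach
      obtain ⟨ht, -⟩ := hkey C₁ h₁ hc1 Wk hrep₁
      have : C₂ = C₁ := by rw [← hrep₂]; exact ht
      exact Subtype.ext this.symm
  calc Nat.card _ ≤ Nat.card (Option {C : G.ConnectedComponent //
        ∀ v, G.connectedComponentMk v = C → (G.neighborSet v).ncard = 2}) :=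
        Nat.card_le_card_of_injective f hinj
    _ = _ + 1 := Finite.card_option

variable {V : Type*}

lemma min'_congr {α : Type*} [LinearOrder α] {s t : Finset α} (h : s = t)
    (hs : s.Nonempty) (ht : t.Nonempty) : s.min' hs = t.min' ht := by subst h; rfl

lemma path_count [Fintype V] (G G' : SimpleGraph V) (e₁ e₂ : V)
    (hG : ∀ v, (G.neighborSet v).ncard ≤ 2)
    (hd2 : ∀ v, (G'.neighborSet v).ncard ≤ 2)
    (hclass : ∀ w, (G'.neighborSet w).ncard = 1 → ¬ (G.neighborSet w).ncard ≤ 1 →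
      w = e₁ ∨ w = e₂) :
    Nat.card {comp : G'.ConnectedComponent //
        ∃ v, G'.connectedComponentMk v = comp ∧ (G'.neighborSet v).ncard = 1} ≤
    Nat.card {comp : G.ConnectedComponent //
        ∃ v, G.connectedComponentMk v = comp ∧ (G.neighborSet v).ncard ≤ 1} + 1 := by
  classical
  haveI : Finite (G.ConnectedComponent) := Quot.finite _
  haveI : Finite (G'.ConnectedComponent) := Quot.finite _
  letI : LinearOrder V := LinearOrder.lift' (Fintype.equivFin V) (Equiv.injective _)
  set T' := {comp : G'.ConnectedComponent //
      ∃ v, G'.connectedComponentMk v = comp ∧ (G'.neighborSet v).ncard = 1} with hT'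
  set A := {comp : G.ConnectedComponent //
      ∃ v, G.connectedComponentMk v = comp ∧ (G.neighborSet v).ncard ≤ 1} with hA
  set va : T' → V := fun C => Classical.choose C.2 with hvadef
  have hva : ∀ C : T', G'.connectedComponentMk (va C) = C.1 ∧
      (G'.neighborSet (va C)).ncard = 1 := fun C => Classical.choose_spec C.2
  have hFex : ∀ C : T', ∃ w, G'.Reachable (va C) w ∧ w ≠ va C ∧
      (G'.neighborSet w).ncard = 1 := fun C => exists_other_endpoint G' hd2 (hva C).2
  set wa : T' → V := fun C => Classical.choose (hFex C) with hwadef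
  have hwa : ∀ C : T', G'.Reachable (va C) (wa C) ∧ wa C ≠ va C ∧
      (G'.neighborSet (wa C)).ncard = 1 := fun C => Classical.choose_spec (hFex C)
  set vert : T' → Bool → V := fun C b => if b then va C else wa C with hvertdef
  have hvert1 : ∀ (C : T') (b : Bool), (G'.neighborSet (vert C b)).ncard = 1 := by
    intro C b
    cases b
    · simpa [hvertdef] using (hwa C).2.2
    · simpa [hvertdef] using (hva C).2
  have hvertC : ∀ (C : T') (b : Bool), G'.connectedComponentMk (vert C b) = C.1 := by
    intro C b
    cases b
    · have h1 : G'.connectedComponentMk (va C) = G'.connectedComponentMk (wa C) :=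
        (ConnectedComponent.eq).mpr (hwa C).1
      simpa [hvertdef] using h1.symm.trans (hva C).1
    · simpa [hvertdef] using (hva C).1
  have hfinish : ∀ (C D : T') (b b' : Bool), vert C b = vert D b' → (C, b) = (D, b') := by
    intro C D b b' hww
    have hCD : C = D := Subtype.ext
      (((hvertC C b).symm.trans (by rw [hww])).trans (hvertC D b'))
    subst hCD
    have hbb : b = b' := by
      cases b <;> cases b' <;> try rfl
      · simp only [hvertdef, Bool.false_eq_true, if_false, if_true] at hww
        exact absurd hww (hwa C).2.1
      · simp only [hvertdef, Bool.false_eq_true, if_false, if_true] at hww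
        exact absurd hww.symm (hwa C).2.1
    rw [hbb]
  set fib : V → Finset V := fun w => Finset.univ.filter (fun z =>
      (G'.neighborSet z).ncard = 1 ∧ (G.neighborSet z).ncard ≤ 1 ∧
      G.connectedComponentMk z = G.connectedComponentMk w) with hfibdef
  have hfibmem : ∀ (C : T') (b : Bool), (G.neighborSet (vert C b)).ncard ≤ 1 →
      vert C b ∈ fib (vert C b) := by
    intro C b h
    rw [hfibdef]
    exact Finset.mem_filter.mpr ⟨Finset.mem_univ _, hvert1 C b, h, rfl⟩
  set g : T' × Bool → (A × Bool) ⊕ Bool := fun Cb =>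
    if h : (G.neighborSet (vert Cb.1 Cb.2)).ncard ≤ 1 then
      Sum.inl (⟨⟨G.connectedComponentMk (vert Cb.1 Cb.2), vert Cb.1 Cb.2, rfl, h⟩,
        decide (vert Cb.1 Cb.2 =
          (fib (vert Cb.1 Cb.2)).min' ⟨vert Cb.1 Cb.2, hfibmem Cb.1 Cb.2 h⟩)⟩)
    else Sum.inr (decide (vert Cb.1 Cb.2 = e₁)) with hgdef
  have hginj : Function.Injective g := by
    rintro ⟨C, b⟩ ⟨D, b'⟩ h
    apply hfinish
    simp only [hgdef] at h
    split_ifs at h with hh₁ hh₂ hh₂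
    · -- both old leaves
      simp only [Sum.inl.injEq, Prod.mk.injEq] at h
      obtain ⟨hcomp, hbool⟩ := h
      have hcomp' : G.connectedComponentMk (vert C b) = G.connectedComponentMk (vert D b') :=
        Subtype.ext_iff.mp hcomp
      by_cases hww : vert C b = vert D b'
      · exact hww
      exfalso
      have hfib : fib (vert C b) = fib (vert D b') := by
        ext z
        simp only [hfibdef, Finset.mem_filter]
        rw [hcomp']
      replace hbool : decide (vert C b = (fib (vert D b')).min' ⟨vert D b', hfibmem D b' hh₂⟩) =
          decide (vert D b' = (fib (vert D b')).min' ⟨vert D b', hfibmem D b' hh₂⟩) := by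
        convert hbool using 3
        exact (min'_congr hfib _ _).symm
      set m := (fib (vert D b')).min' ⟨vert D b', hfibmem D b' hh₂⟩ with hmdef
      have hmm : m ∈ fib (vert D b') := Finset.min'_mem _ _
      rw [hfibdef] at hmm
      simp only [Finset.mem_filter, Finset.mem_univ, true_and] at hmm
      obtain ⟨hm1, hm2, hm3⟩ := hmm
      have hiff : (vert C b = m) ↔ (vert D b' = m) := by simpa using hbool
      rcases em (vert D b' = m) with hc | hc
      · exact hww ((hiff.mpr hc).trans hc.symm)
      have hw1m : vert C b ≠ m := fun hcc => hc (hiff.mp hcc)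
      exact at_most_two_leaves G hG
        ((ConnectedComponent.eq).mp hcomp')
        ((ConnectedComponent.eq).mp (hcomp'.trans hm3.symm))
        hww hw1m hc hh₁ hh₂ hm2
    · -- both new endpoints
      simp only [Sum.inr.injEq] at h
      have hiff : (vert C b = e₁) ↔ (vert D b' = e₁) := by simpa using h
      rcases hclass _ (hvert1 C b) hh₁ with h1 | h1
      · exact h1.trans (hiff.mp h1).symm
      · rcases hclass _ (hvert1 D b') hh₂ with h2 | h2
        · exact (hiff.mpr h2).trans h2.symm
        · exact h1.trans h2.symm
  have hcard := Nat.card_le_card_of_injective g hginj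
  have h1 : Nat.card (T' × Bool) = Nat.card T' * 2 := by
    rw [Nat.card_prod]; simp [Nat.card_eq_fintype_card]
  have h2 : Nat.card ((A × Bool) ⊕ Bool) = Nat.card A * 2 + 2 := by
    rw [Nat.card_sum, Nat.card_prod]; simp [Nat.card_eq_fintype_card]
  rw [h1, h2] at hcard
  omega
end Aux11

open Aux11

/-- Let `G` be a vertex-disjoint union of paths and cycles (every vertex has degree at most
2), with `p` components that are paths (components containing a vertex of degree at most 1)
and `c` components that are cycles (components all of whose vertices have degree 2).
Let `P₁, P₂` be vertex-disjoint non-degenerate subpaths of `G`, let `x` be an endpoint of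
`P₁` and `y` an endpoint of `P₂`, and assume `{x, y}` is not an edge of `G`.  Then the graph
obtained from `G` by deleting the edges of `P₁` and `P₂` and adding the edge `{x, y}` is a
vertex-disjoint union of paths and cycles, with at most `p + 1` components that are
non-degenerate paths (components containing a vertex of degree exactly 1) and at most
`c + 1` components that are cycles. -/
theorem stmt11 {V : Type*} [Fintype V] (G : SimpleGraph V)
    (hG : ∀ v : V, (G.neighborSet v).ncard ≤ 2)
    (p c : ℕ)
    (hp : p = Nat.card {comp : G.ConnectedComponent //
        ∃ v, G.connectedComponentMk v = comp ∧ (G.neighborSet v).ncard ≤ 1})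
    (hc : c = Nat.card {comp : G.ConnectedComponent //
        ∀ v, G.connectedComponentMk v = comp → (G.neighborSet v).ncard = 2})
    {u₁ v₁ u₂ v₂ : V} (P₁ : G.Walk u₁ v₁) (P₂ : G.Walk u₂ v₂)
    (hP₁ : P₁.IsPath) (hP₂ : P₂.IsPath)
    (hl₁ : 1 ≤ P₁.length) (hl₂ : 1 ≤ P₂.length)
    (hdisj : Disjoint {w : V | w ∈ P₁.support} {w : V | w ∈ P₂.support})
    (x y : V) (hx : x = u₁ ∨ x = v₁) (hy : y = u₂ ∨ y = v₂)
    (hxy : ¬ G.Adj x y) :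
    ∀ G' : SimpleGraph V,
      G' = SimpleGraph.fromEdgeSet
        ((G.edgeSet \ ({e | e ∈ P₁.edges} ∪ {e | e ∈ P₂.edges})) ∪ {s(x, y)}) →
      (∀ v : V, (G'.neighborSet v).ncard ≤ 2) ∧
      Nat.card {comp : G'.ConnectedComponent //
          ∃ v, G'.connectedComponentMk v = comp ∧ (G'.neighborSet v).ncard = 1}
        ≤ p + 1 ∧
      Nat.card {comp : G'.ConnectedComponent //
          ∀ v, G'.connectedComponentMk v = comp → (G'.neighborSet v).ncard = 2}
        ≤ c + 1 := by
  classical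
  intro G' hG'E
  have hxs : x ∈ P₁.support := by
    rcases hx with rfl | rfl
    exacts [P₁.start_mem_support, P₁.end_mem_support]
  have hys : y ∈ P₂.support := by
    rcases hy with rfl | rfl
    exacts [P₂.start_mem_support, P₂.end_mem_support]
  have hxny : x ≠ y := fun h => Set.disjoint_left.mp hdisj hxs (h ▸ hys)
  -- adjacency characterisation of G'
  have hadj' : ∀ a b : V, G'.Adj a b ↔
      ((G.Adj a b ∧ s(a, b) ∉ P₁.edges ∧ s(a, b) ∉ P₂.edges) ∨ s(a, b) = s(x, y)) := by
    intro a b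
    rw [hG'E, SimpleGraph.fromEdgeSet_adj]
    constructor
    · rintro ⟨hmem, hne⟩
      rcases hmem with ⟨hE, hP⟩ | hxyE
      · rw [Set.mem_union] at hP
        push_neg at hP
        exact Or.inl ⟨hE, hP.1, hP.2⟩
      · exact Or.inr hxyE
    · rintro (⟨hadj, h1, h2⟩ | hsxy)
      · exact ⟨Or.inl ⟨hadj, fun hm => by
          rcases Set.mem_union _ _ _ |>.mp hm with hm | hm
          exacts [h1 hm, h2 hm]⟩, hadj.ne⟩
      · refine ⟨Or.inr hsxy, ?_⟩
        rcases Sym2.eq_iff.mp hsxy with ⟨rfl, rfl⟩ | ⟨rfl, rfl⟩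
        exacts [hxny, hxny.symm]
  have hxyG' : G'.Adj x y := (hadj' x y).mpr (Or.inr rfl)
  -- unique P₁-edge at x
  have hzex : ∃ z, s(x, z) ∈ P₁.edges ∧ ∀ z', s(x, z') ∈ P₁.edges → z' = z := by
    rcases hx with rfl | rfl
    · obtain ⟨z, hz⟩ := endpoint_edge P₁ hl₁
      exact ⟨z, hz, fun z' h' => endpoint_edge_unique P₁ hP₁ h' hz⟩
    · obtain ⟨z, hz⟩ := endpoint_edge P₁.reverse (by rwa [SimpleGraph.Walk.length_reverse])
      have hmem : ∀ z', s(x, z') ∈ P₁.reverse.edges ↔ s(x, z') ∈ P₁.edges := by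
        intro z'; rw [SimpleGraph.Walk.edges_reverse, List.mem_reverse]
      exact ⟨z, (hmem z).mp hz, fun z' h' =>
        endpoint_edge_unique P₁.reverse hP₁.reverse ((hmem z').mpr h') hz⟩
  obtain ⟨z₁, hz₁m, hz₁u⟩ := hzex
  have hzey : ∃ z, s(y, z) ∈ P₂.edges ∧ ∀ z', s(y, z') ∈ P₂.edges → z' = z := by
    rcases hy with rfl | rfl
    · obtain ⟨z, hz⟩ := endpoint_edge P₂ hl₂
      exact ⟨z, hz, fun z' h' => endpoint_edge_unique P₂ hP₂ h' hz⟩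
    · obtain ⟨z, hz⟩ := endpoint_edge P₂.reverse (by rwa [SimpleGraph.Walk.length_reverse])
      have hmem : ∀ z', s(y, z') ∈ P₂.reverse.edges ↔ s(y, z') ∈ P₂.edges := by
        intro z'; rw [SimpleGraph.Walk.edges_reverse, List.mem_reverse]
      exact ⟨z, (hmem z).mp hz, fun z' h' =>
        endpoint_edge_unique P₂.reverse hP₂.reverse ((hmem z').mpr h') hz⟩
  obtain ⟨z₂, hz₂m, hz₂u⟩ := hzey
  have hz₁adj : G.Adj x z₁ := P₁.adj_of_mem_edges hz₁m
  have hz₂adj : G.Adj y z₂ := P₂.adj_of_mem_edges hz₂m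
  -- neighbour set of x in G'
  have hnbrx : G'.neighborSet x = (G.neighborSet x \ {z₁}) ∪ {y} := by
    ext w
    simp only [SimpleGraph.mem_neighborSet, Set.mem_union, Set.mem_diff,
      Set.mem_singleton_iff]
    constructor
    · intro hw
      rcases (hadj' x w).mp hw with ⟨hadj, h1, _⟩ | hs
      · exact Or.inl ⟨hadj, fun hwz => h1 (hwz ▸ hz₁m)⟩
      · rcases Sym2.eq_iff.mp hs with ⟨-, h⟩ | ⟨h1, h2⟩
        exacts [Or.inr h, (hxny h1).elim]
    · rintro (⟨hadj, hwz⟩ | rfl)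
      · refine (hadj' x w).mpr (Or.inl ⟨hadj, fun hm => hwz (hz₁u w hm), fun hm => ?_⟩)
        exact Set.disjoint_left.mp hdisj hxs
          (Set.mem_setOf_eq ▸ P₂.fst_mem_support_of_mem_edges hm)
      · exact hxyG'
  have hz₁mem : z₁ ∈ G.neighborSet x := hz₁adj
  have hdx : (G'.neighborSet x).ncard = (G.neighborSet x).ncard := by
    rw [hnbrx]
    have hyd : y ∉ G.neighborSet x \ {z₁} := fun h => hxy h.1
    rw [Set.ncard_union_eq (Set.disjoint_singleton_right.mpr hyd)
      ((Set.toFinite _).diff) (Set.toFinite _),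
      Set.ncard_diff_singleton_of_mem hz₁mem, Set.ncard_singleton]
    have hpos : 0 < (G.neighborSet x).ncard :=
      (Set.ncard_pos (Set.toFinite _)).mpr ⟨z₁, hz₁mem⟩
    omega
  -- neighbour set of y in G'
  have hnbry : G'.neighborSet y = (G.neighborSet y \ {z₂}) ∪ {x} := by
    ext w
    simp only [SimpleGraph.mem_neighborSet, Set.mem_union, Set.mem_diff,
      Set.mem_singleton_iff]
    constructor
    · intro hw
      rcases (hadj' y w).mp hw with ⟨hadj, _, h2⟩ | hs
      · exact Or.inl ⟨hadj, fun hwz => h2 (hwz ▸ hz₂m)⟩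
      · rcases Sym2.eq_iff.mp hs with ⟨h1, h2⟩ | ⟨-, h⟩
        exacts [(hxny h1.symm).elim, Or.inr h]
    · rintro (⟨hadj, hwz⟩ | rfl)
      · refine (hadj' y w).mpr (Or.inl ⟨hadj, fun hm => ?_, fun hm => hwz (hz₂u w hm)⟩)
        exact Set.disjoint_right.mp hdisj hys
          (Set.mem_setOf_eq ▸ P₁.fst_mem_support_of_mem_edges hm)
      · exact hxyG'.symm
  have hz₂mem : z₂ ∈ G.neighborSet y := hz₂adj
  have hdy : (G'.neighborSet y).ncard = (G.neighborSet y).ncard := by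
    rw [hnbry]
    have hxd : x ∉ G.neighborSet y \ {z₂} := fun h => hxy h.1.symm
    rw [Set.ncard_union_eq (Set.disjoint_singleton_right.mpr hxd)
      ((Set.toFinite _).diff) (Set.toFinite _),
      Set.ncard_diff_singleton_of_mem hz₂mem, Set.ncard_singleton]
    have hpos : 0 < (G.neighborSet y).ncard :=
      (Set.ncard_pos (Set.toFinite _)).mpr ⟨z₂, hz₂mem⟩
    omega
  have hsubv : ∀ v, v ≠ x → v ≠ y → G'.neighborSet v ⊆ G.neighborSet v := by
    intro v hvx hvy w hw
    rcases (hadj' v w).mp hw with ⟨h, -, -⟩ | hs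
    · exact h
    · rcases Sym2.eq_iff.mp hs with ⟨h1, -⟩ | ⟨h1, -⟩
      exacts [absurd h1 hvx, absurd h1 hvy]
  have hd2 : ∀ v, (G'.neighborSet v).ncard ≤ 2 := by
    intro v
    rcases em (v = x) with rfl | hvx
    · rw [hdx]; exact hG v
    rcases em (v = y) with rfl | hvy
    · rw [hdy]; exact hG v
    · exact le_trans (Set.ncard_le_ncard (hsubv v hvx hvy) (Set.toFinite _)) (hG v)
  refine ⟨hd2, ?_, ?_⟩
  · rw [hp]
    classical
    set e₁ : V := if x = u₁ then v₁ else u₁ with he₁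
    set e₂ : V := if y = u₂ then v₂ else u₂ with he₂
    have hclass : ∀ w, (G'.neighborSet w).ncard = 1 → ¬ (G.neighborSet w).ncard ≤ 1 →
        w = e₁ ∨ w = e₂ := by
      intro w h1 h2
      have hG2 : (G.neighborSet w).ncard = 2 := le_antisymm (hG w) (by omega)
      have hwx : w ≠ x := by rintro rfl; rw [hdx] at h1; omega
      have hwy : w ≠ y := by rintro rfl; rw [hdy] at h1; omega
      have hlost : ∃ z, G.Adj w z ∧ ¬ G'.Adj w z := by
        by_contra hcon
        push_neg at hcon
        have hsub : G.neighborSet w ⊆ G'.neighborSet w := fun z hz => hcon z hz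
        have := Set.ncard_le_ncard hsub (Set.toFinite _)
        omega
      obtain ⟨z, hz, hz'⟩ := hlost
      have hzP : s(w, z) ∈ P₁.edges ∨ s(w, z) ∈ P₂.edges := by
        by_contra hcon
        push_neg at hcon
        exact hz' ((hadj' w z).mpr (Or.inl ⟨hz, hcon.1, hcon.2⟩))
      have hintP : ∀ {a b : V} (P : G.Walk a b), P.IsPath →
          (∀ q : V, s(w, q) ∈ P.edges → ¬ G'.Adj w q) → w ∈ P.support →
          w ≠ a → w ≠ b → False := by
        intro a b P hPp hdel hws hwa hwb
        obtain ⟨t₁, t₂, hne, hm1, hm2⟩ := interior_two_edges P hPp hws hwa hwb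
        have hsub2 : ({t₁, t₂} : Set V) ⊆ G.neighborSet w := by
          rintro q (rfl | rfl)
          exacts [P.adj_of_mem_edges hm1, P.adj_of_mem_edges hm2]
        have hEq : ({t₁, t₂} : Set V) = G.neighborSet w :=
          Set.eq_of_subset_of_ncard_le hsub2
            (by rw [Set.ncard_pair hne]; omega) (Set.toFinite _)
        have hempty : G'.neighborSet w = ∅ := by
          ext q
          simp only [SimpleGraph.mem_neighborSet, Set.mem_empty_iff_false, iff_false]
          intro hq
          have hqn : q ∈ G.neighborSet w := hsubv w hwx hwy hq
          rw [← hEq] at hqn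
          rcases hqn with rfl | rfl
          exacts [hdel q hm1 hq, hdel q hm2 hq]
        rw [hempty] at h1
        simp at h1
      have hdel1 : ∀ q : V, s(w, q) ∈ P₁.edges → ¬ G'.Adj w q := by
        intro q hq hadj
        rcases (hadj' w q).mp hadj with ⟨-, hn1, -⟩ | hs
        · exact hn1 hq
        · rcases Sym2.eq_iff.mp hs with ⟨h1', -⟩ | ⟨h1', -⟩
          exacts [hwx h1', hwy h1']
      have hdel2 : ∀ q : V, s(w, q) ∈ P₂.edges → ¬ G'.Adj w q := by
        intro q hq hadj
        rcases (hadj' w q).mp hadj with ⟨-, -, hn2⟩ | hs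
        · exact hn2 hq
        · rcases Sym2.eq_iff.mp hs with ⟨h1', -⟩ | ⟨h1', -⟩
          exacts [hwx h1', hwy h1']
      rcases hzP with hm | hm
      · left
        have hws : w ∈ P₁.support := P₁.fst_mem_support_of_mem_edges hm
        by_cases hwu : w = u₁
        · have hxu : ¬ x = u₁ := fun h => hwx (hwu.trans h.symm)
          rw [he₁, if_neg hxu]
          exact hwu
        by_cases hwv : w = v₁
        · have hxu : x = u₁ := by
            rcases hx with h | h
            · exact h
            · exact absurd (hwv.trans h.symm) hwx
          rw [he₁, if_pos hxu]
          exact hwv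
        · exact absurd (hintP P₁ hP₁ hdel1 hws hwu hwv) not_false
      · right
        have hws : w ∈ P₂.support := P₂.fst_mem_support_of_mem_edges hm
        by_cases hwu : w = u₂
        · have hyu : ¬ y = u₂ := fun h => hwy (hwu.trans h.symm)
          rw [he₂, if_neg hyu]
          exact hwu
        by_cases hwv : w = v₂
        · have hyu : y = u₂ := by
            rcases hy with h | h
            · exact h
            · exact absurd (hwv.trans h.symm) hwy
          rw [he₂, if_pos hyu]
          exact hwv
        · exact absurd (hintP P₂ hP₂ hdel2 hws hwu hwv) not_false
    exact path_count G G' e₁ e₂ hG hd2 hclass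
  · rw [hc]
    exact cycle_count G G' x y hG (fun v hvx hvy w hw => hsubv v hvx hvy hw) hxyG'
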